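/- Let $a,b$ be real numbers with $0<a<b$ and define $a_n=1/(a^n+b^n)$ for $n\ge1$. Define $r_1=1/b$ and $r_{p+1}=a^p/b^{p+1}$ for $p\ge1$. Then $\lim_{n\to\infty}\dfrac{a_{n+1}}{a_n}=\dfrac1b$ and for every $p\ge1$, $\lim_{n\to\infty}\dfrac{L_{r_1\dots r_p}(a_{n+1})}{L_{r_1\dots r_p}(a_n)}=\dfrac{a^p}{b^{p+1}}$. -/

import Mathlib

open Filter Finset

/-- `Lop r p a n = L_{r_1 … r_p}(a_n)`. -/
noncomputable def Lop (r : ℕ → ℂ) : ℕ → (ℕ → ℂ) → ℕ → ℂ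
  | 0 => fun a n => a n
  | p + 1 => fun a n => Lop r p a (n + 1) - r (p + 1) * Lop r p a n

/-- `Pd a b p n = ∏_{k=0}^{p} (a^(n+k) + b^(n+k))` over ℂ. -/
noncomputable def Pd (a b : ℝ) : ℕ → ℕ → ℂ
  | 0, n => (a:ℂ)^n + (b:ℂ)^n
  | p+1, n => Pd a b p n * ((a:ℂ)^(n+p+1) + (b:ℂ)^(n+p+1))

lemma Dne (a b : ℝ) (ha : 0 < a) (hb : 0 < b) (m : ℕ) : (a:ℂ)^m + (b:ℂ)^m ≠ 0 := by
  have h : (0:ℝ) < a ^ m + b ^ m := by positivity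
  intro h0
  rw [show ((a:ℂ)^m + (b:ℂ)^m) = ((a^m + b^m : ℝ) : ℂ) by push_cast; ring] at h0
  exact h.ne' (by exact_mod_cast h0)

lemma Pdne (a b : ℝ) (ha : 0 < a) (hb : 0 < b) : ∀ p n, Pd a b p n ≠ 0
  | 0, n => Dne a b ha hb n
  | p+1, n => mul_ne_zero (Pdne a b ha hb p n) (Dne a b ha hb (n+p+1))

lemma Pd_shift (a b : ℝ) : ∀ p n, Pd a b (p+1) n = ((a:ℂ)^n + (b:ℂ)^n) * Pd a b p (n+1)
  | 0, n => by simp [Pd]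
  | p+1, n => by
      have h := Pd_shift a b p n
      show Pd a b (p+1) n * _ = _
      rw [h]
      show _ = ((a:ℂ)^n + (b:ℂ)^n) * (Pd a b p (n+1) * ((a:ℂ)^(n+1+p+1) + (b:ℂ)^(n+1+p+1)))
      have : n+1+p+1 = n+(p+1)+1 := by omega
      rw [this]; ring

lemma tendD (a b : ℝ) (ha : 0 < a) (hab : a < b) (k : ℕ) :
    Tendsto (fun n : ℕ => ((a:ℂ)^n + (b:ℂ)^n) / ((a:ℂ)^(n+k) + (b:ℂ)^(n+k))) atTop
      (nhds (1/(b:ℂ)^k)) := by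
  have hb : (0:ℝ) < b := ha.trans hab
  set t : ℂ := (a:ℂ)/(b:ℂ) with ht
  have htn : ‖t‖ < 1 := by
    have ht2 : t = ((a/b : ℝ) : ℂ) := by rw [ht]; push_cast; ring
    rw [ht2, Complex.norm_real, Real.norm_eq_abs, abs_of_pos (by positivity),
      div_lt_one hb]
    exact hab
  have h0 : Tendsto (fun n : ℕ => t ^ n) atTop (nhds 0) :=
    tendsto_pow_atTop_nhds_zero_of_norm_lt_one htn
  have h1 : Tendsto (fun n : ℕ => t ^ n + 1) atTop (nhds 1) := by
    simpa using h0.add tendsto_const_nhds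
  have h2 : Tendsto (fun n : ℕ => t ^ (n+k) + 1) atTop (nhds 1) := by
    have : Tendsto (fun n : ℕ => t ^ (n+k)) atTop (nhds 0) := by
      simpa [pow_add] using h0.mul_const (t ^ k)
    simpa using this.add tendsto_const_nhds
  have h3 := (h1.div h2 one_ne_zero).div_const ((b:ℂ)^k)
  have h4 : (1:ℂ)/1/(b:ℂ)^k = 1/(b:ℂ)^k := by ring
  rw [h4] at h3
  apply h3.congr
  intro n
  have hbC : (b:ℂ) ≠ 0 := by
    simpa using (Complex.ofReal_ne_zero.mpr hb.ne')
  have hX : (a:ℂ)^(n+k) + (b:ℂ)^(n+k) ≠ 0 := Dne a b ha hb (n+k)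
  have htk : t ^ (n+k) + 1 ≠ 0 := by
    intro h0'
    rw [ht, div_pow, div_add' _ _ _ (pow_ne_zero _ hbC), div_eq_zero_iff] at h0'
    rcases h0' with h0' | h0'
    · exact hX (by rw [← h0']; ring)
    · exact pow_ne_zero _ hbC h0'
  simp only [Pi.div_apply]
  rw [ht] at htk ⊢
  simp only [div_pow] at htk ⊢
  field_simp
  ring

theorem stmt_15 (a b : ℝ) (ha : 0 < a) (hab : a < b)
    (aa : ℕ → ℂ) (haa : ∀ n, 1 ≤ n → aa n = 1 / ((a : ℂ) ^ n + (b : ℂ) ^ n))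
    (r : ℕ → ℂ) (hr1 : r 1 = 1 / (b : ℂ))
    (hrp : ∀ p, 1 ≤ p → r (p + 1) = (a : ℂ) ^ p / (b : ℂ) ^ (p + 1)) :
    Tendsto (fun n => aa (n + 1) / aa n) atTop (nhds (1 / (b : ℂ))) ∧
    ∀ p, 1 ≤ p → Tendsto (fun n => Lop r p aa (n + 1) / Lop r p aa n) atTop
      (nhds ((a : ℂ) ^ p / (b : ℂ) ^ (p + 1))) := by
  have hb : (0:ℝ) < b := ha.trans hab
  have hbC : (b:ℂ) ≠ 0 := by simpa using (Complex.ofReal_ne_zero.mpr hb.ne')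
  have haC : (a:ℂ) ≠ 0 := by simpa using (Complex.ofReal_ne_zero.mpr ha.ne')
  have hD := Dne a b ha hb
  -- key closed formula
  have key : ∀ p, 1 ≤ p → ∃ C : ℂ, C ≠ 0 ∧
      ∀ n, 1 ≤ n → Lop r p aa n = C * (a:ℂ)^(p*n) / Pd a b p n := by
    intro p hp
    induction p, hp using Nat.le_induction with
    | base =>
      refine ⟨((b:ℂ) - (a:ℂ))/(b:ℂ), ?_, ?_⟩
      · apply div_ne_zero _ hbC
        rw [sub_ne_zero]
        intro h
        exact hab.ne' (by exact_mod_cast h)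
      · intro n hn
        show aa (n+1) - r 1 * aa n = _
        rw [haa (n+1) (by omega), haa n hn, hr1]
        show _ = _ * _ / (((a:ℂ)^n + (b:ℂ)^n) * ((a:ℂ)^(n+0+1) + (b:ℂ)^(n+0+1)))
        have hn0 : n + 0 + 1 = n + 1 := by omega
        rw [hn0]
        have h1 := hD n
        have h2 := hD (n+1)
        field_simp
        ring
    | succ p hp ih =>
      obtain ⟨C, hC, hform⟩ := ih
      have hba : (b:ℂ)^(p+1) - (a:ℂ)^(p+1) ≠ 0 := by
        rw [sub_ne_zero]
        have hlt : a^(p+1) < b^(p+1) := by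
          apply pow_lt_pow_left₀ hab ha.le
          omega
        intro h
        exact hlt.ne' (by exact_mod_cast h)
      refine ⟨C * ((b:ℂ)^(p+1) - (a:ℂ)^(p+1)) * (a:ℂ)^p / (b:ℂ)^(p+1), ?_, ?_⟩
      · exact div_ne_zero (mul_ne_zero (mul_ne_zero hC hba) (pow_ne_zero _ haC))
          (pow_ne_zero _ hbC)
      · intro n hn
        show Lop r p aa (n+1) - r (p+1) * Lop r p aa n = _
        rw [hform (n+1) (by omega), hform n hn, hrp p hp]
        have hPd : Pd a b (p+1) n
            = Pd a b p n * ((a:ℂ)^(n+p+1) + (b:ℂ)^(n+p+1)) := rfl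
        have hPs := Pd_shift a b p n
        have hB : Pd a b p (n+1)
            = Pd a b p n * ((a:ℂ)^(n+p+1) + (b:ℂ)^(n+p+1)) / ((a:ℂ)^n + (b:ℂ)^n) := by
          rw [eq_div_iff (hD n)]
          have := hPd.symm.trans hPs
          linear_combination -this
        rw [hPd, hB]
        have hA := Pdne a b ha hb p n
        have hDn := hD n
        have hX := hD (n+p+1)
        field_simp
        ring
  constructor
  · have h := tendD a b ha hab 1
    rw [pow_one] at h
    apply h.congr'
    filter_upwards [eventually_ge_atTop 1] with n hn
    rw [haa (n+1) (by omega), haa n hn]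
    have h1 := hD n
    have h2 := hD (n+1)
    field_simp
  · intro p hp
    obtain ⟨C, hC, hform⟩ := key p hp
    have h := (tendD a b ha hab (p+1)).const_mul ((a:ℂ)^p)
    rw [mul_one_div] at h
    apply h.congr'
    filter_upwards [eventually_ge_atTop 1] with n hn
    rw [hform (n+1) (by omega), hform n hn]
    have hPd : Pd a b (p+1) n
        = Pd a b p n * ((a:ℂ)^(n+p+1) + (b:ℂ)^(n+p+1)) := rfl
    have hPs := Pd_shift a b p n
    have hB : Pd a b p (n+1)
        = Pd a b p n * ((a:ℂ)^(n+p+1) + (b:ℂ)^(n+p+1)) / ((a:ℂ)^n + (b:ℂ)^n) := by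
      rw [eq_div_iff (hD n)]
      have := hPd.symm.trans hPs
      linear_combination -this
    have hA := Pdne a b ha hb p n
    have hC' : C * (a:ℂ)^(p*n) ≠ 0 := mul_ne_zero hC (pow_ne_zero _ haC)
    rw [div_div_div_comm]
    have hc : C * (a:ℂ)^(p*(n+1)) / (C * (a:ℂ)^(p*n)) = (a:ℂ)^p := by
      rw [show C * (a:ℂ)^(p*(n+1)) = (C * (a:ℂ)^(p*n)) * (a:ℂ)^p from by ring]
      exact mul_div_cancel_left₀ _ hC'
    rw [hc, hB, div_div,
      mul_comm ((a:ℂ)^n + (b:ℂ)^n) (Pd a b p n),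
      mul_div_mul_left _ _ hA,
      div_div_eq_mul_div, mul_div_assoc]
    rfl
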